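/- Suppose v: [L,M] → ℝ is C² and satisfies (σ₊²(x)/2)v''(x) + μ₊(x)v'(x) − r v(x) = 0 on (L,M), with μ₊(x) ≥ rx for all x, v(M) = M, and v(L) ≥ L. Then v(x) ≥ x for all x ∈ [L,M]. -/

import Mathlib

open Set

/-- Positive-regime part of Lemma A.2: if `v` is C² on `[L,M]`, solves
`(σ₊²/2) v'' + μ₊ v' − r v = 0` on `(L,M)` with `μ₊(x) ≥ r x`, `v(M) = M` and
`v(L) ≥ L`, then `v(x) ≥ x` on `[L,M]`. -/
theorem value_dominates_identity_pos_regime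
    (L M r : ℝ) (hL : 0 < L) (hLM : L < M) (hr : 0 ≤ r)
    (σp μp : ℝ → ℝ)
    (hσc : ContinuousOn σp (Icc L M)) (hσpos : ∀ x ∈ Icc L M, 0 < σp x)
    (hμc : ContinuousOn μp (Icc L M))
    (v : ℝ → ℝ) (hv : ContDiffOn ℝ 2 v (Icc L M))
    (hode : ∀ x ∈ Ioo L M,
      (σp x ^ 2 / 2) * deriv (deriv v) x + μp x * deriv v x - r * v x = 0)
    (hμ : ∀ x ∈ Icc L M, r * x ≤ μp x)
    (hvM : v M = M) (hvL : L ≤ v L) :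
    ∀ x ∈ Icc L M, x ≤ v x := by
  -- auxiliary barrier ψ x = exp M − exp x ≥ 0 on [L,M]
  have hψ : ∀ x ∈ Icc L M, 0 ≤ Real.exp M - Real.exp x := by
    intro x hx
    have := Real.exp_le_exp.mpr hx.2
    linarith
  have hvc : ContinuousOn v (Icc L M) := hv.continuousOn
  have hvo : ContDiffOn ℝ 2 v (Ioo L M) := hv.mono Ioo_subset_Icc_self
  have hv1 : DifferentiableOn ℝ v (Ioo L M) := hvo.differentiableOn two_ne_zero
  have hdvd : DifferentiableOn ℝ (deriv v) (Ioo L M) :=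
    (hvo.deriv_of_isOpen (m := 1) isOpen_Ioo (by norm_num)).differentiableOn one_ne_zero
  -- key claim: for every ε > 0, w = v - id + ε ψ is nonnegative on [L,M]
  have key : ∀ ε : ℝ, 0 < ε → ∀ x ∈ Icc L M,
      0 ≤ v x - x + ε * (Real.exp M - Real.exp x) := by
    intro ε hε
    set w : ℝ → ℝ := fun x => v x - x + ε * (Real.exp M - Real.exp x) with hwdef
    have hwc : ContinuousOn w (Icc L M) := by
      apply ContinuousOn.add
      · exact hvc.sub continuousOn_id
      · exact (continuousOn_const.sub (Real.continuous_exp.continuousOn)).const_smul ε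
    by_contra hcon
    push_neg at hcon
    obtain ⟨z, hz, hzneg⟩ := hcon
    obtain ⟨x0, hx0, hmin⟩ :=
      isCompact_Icc.exists_isMinOn (nonempty_Icc.mpr (le_of_lt hLM)) hwc
    have hwx0 : w x0 < 0 := lt_of_le_of_lt (hmin hz) hzneg
    -- x0 is in the open interval
    have hwL : 0 ≤ w L := by
      have h1 : 0 ≤ Real.exp M - Real.exp L := hψ L (left_mem_Icc.mpr hLM.le)
      have : 0 ≤ ε * (Real.exp M - Real.exp L) := mul_nonneg hε.le h1
      simp only [hwdef]
      linarith
    have hwM : 0 ≤ w M := by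
      simp only [hwdef, hvM]
      simp
    have hx0L : L < x0 := by
      rcases lt_or_eq_of_le hx0.1 with h | h
      · exact h
      · exact absurd hwx0 (by rw [h] at hwL; exact not_lt.mpr hwL)
    have hx0M : x0 < M := by
      rcases lt_or_eq_of_le hx0.2 with h | h
      · exact h
      · exact absurd hwx0 (by rw [← h] at hwM; exact not_lt.mpr hwM)
    have hx0o : x0 ∈ Ioo L M := ⟨hx0L, hx0M⟩
    -- derivative of w on the open interval
    set w' : ℝ → ℝ := fun x => deriv v x - 1 - ε * Real.exp x with hw'def
    have hw'at : ∀ x ∈ Ioo L M, HasDerivAt w (w' x) x := by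
      intro x hx
      have hdv : HasDerivAt v (deriv v x) x :=
        (hv1.differentiableAt (isOpen_Ioo.mem_nhds hx)).hasDerivAt
      have he : HasDerivAt (fun y => ε * (Real.exp M - Real.exp y))
          (ε * (0 - Real.exp x)) x :=
        ((hasDerivAt_const x (Real.exp M)).sub (Real.hasDerivAt_exp x)).const_mul ε
      have := (hdv.sub (hasDerivAt_id x)).add he
      refine this.congr_deriv ?_
      simp [hw'def]
      ring
    -- first derivative vanishes at the interior minimum
    have hlocmin : IsLocalMin w x0 :=
      hmin.isLocalMin (Icc_mem_nhds hx0L hx0M)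
    have hw'0 : w' x0 = 0 := hlocmin.hasDerivAt_eq_zero (hw'at x0 hx0o)
    -- second derivative of w at x0
    set c : ℝ := deriv (deriv v) x0 - ε * Real.exp x0 with hcdef
    have hw''at : HasDerivAt w' c x0 := by
      have hddv : HasDerivAt (deriv v) (deriv (deriv v) x0) x0 :=
        (hdvd.differentiableAt (isOpen_Ioo.mem_nhds hx0o)).hasDerivAt
      have := (hddv.sub_const 1).sub ((Real.hasDerivAt_exp x0).const_mul ε)
      exact this
    -- c < 0 from the ODE
    have hcneg : c < 0 := by
      have hodex := hode x0 hx0o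
      have hσ : 0 < σp x0 ^ 2 / 2 := by
        have := hσpos x0 (Ioo_subset_Icc_self hx0o)
        positivity
      have hμx : r * x0 ≤ μp x0 := hμ x0 (Ioo_subset_Icc_self hx0o)
      have hμ0 : 0 ≤ μp x0 :=
        le_trans (mul_nonneg hr (by linarith : (0:ℝ) ≤ x0)) hμx
      have hψ0 : 0 ≤ Real.exp M - Real.exp x0 := hψ x0 (Ioo_subset_Icc_self hx0o)
      have hE : 0 < Real.exp x0 := Real.exp_pos x0
      have hdv1 : deriv v x0 = 1 + ε * Real.exp x0 := by
        have := hw'0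
        simp only [hw'def] at this
        linarith
      have hwx0' : v x0 - x0 + ε * (Real.exp M - Real.exp x0) < 0 := hwx0
      -- (σ²/2) * c < 0
      have hkey : σp x0 ^ 2 / 2 * c < 0 := by
        have h1 : 0 ≤ r * (-(v x0 - x0 + ε * (Real.exp M - Real.exp x0))) :=
          mul_nonneg hr (by linarith)
        have h2 : 0 ≤ ε * (μp x0 * Real.exp x0) :=
          mul_nonneg hε.le (mul_nonneg hμ0 hE.le)
        have h3 : 0 ≤ ε * (r * (Real.exp M - Real.exp x0)) :=
          mul_nonneg hε.le (mul_nonneg hr hψ0)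
        have h4 : 0 < ε * (σp x0 ^ 2 / 2 * Real.exp x0) :=
          mul_pos hε (mul_pos hσ hE)
        -- substitute the ODE
        nlinarith [hodex, hdv1, hμx]
      nlinarith [hσ, hkey]
    -- derive a contradiction: w decreases strictly to the right of x0
    have hslope : ∀ᶠ y in nhdsWithin x0 (Ioi x0), slope w' x0 y < 0 := by
      have htend := hasDerivAt_iff_tendsto_slope.mp hw''at
      have := htend.eventually_lt_const hcneg
      exact nhdsWithin_mono x0 (fun y hy => ne_of_gt hy) this
    have hIoo : Ioo x0 M ∈ nhdsWithin x0 (Ioi x0) := Ioo_mem_nhdsGT_of_mem ⟨le_refl x0, hx0M⟩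
    obtain ⟨u, hu, hsub⟩ := mem_nhdsGT_iff_exists_Ioo_subset.mp
      (Filter.inter_mem hslope hIoo)
    -- pick x1 inside (x0, min u M)
    set x1 : ℝ := (x0 + min u M) / 2 with hx1def
    have humin : x0 < min u M := lt_min hu hx0M
    have hx1a : x0 < x1 := by simp only [hx1def]; linarith
    have hx1b : x1 < min u M := by simp only [hx1def]; linarith
    have hx1u : x1 < u := lt_of_lt_of_le hx1b (min_le_left _ _)
    have hx1M : x1 < M := lt_of_lt_of_le hx1b (min_le_right _ _)
    have hx1mem : x1 ∈ Icc L M := ⟨le_of_lt (lt_trans hx0L hx1a), hx1M.le⟩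
    -- w' < 0 on (x0, x1]
    have hw'neg : ∀ y ∈ Ioo x0 x1, w' y < 0 := by
      intro y hy
      have hyu : y ∈ Ioo x0 u := ⟨hy.1, lt_trans hy.2 hx1u⟩
      have hslt : slope w' x0 y < 0 := (hsub hyu).1
      have hyx0 : 0 < y - x0 := by linarith [hy.1]
      have hsl : slope w' x0 y = w' y / (y - x0) := by
        rw [slope_def_field, hw'0, sub_zero]
      rw [hsl] at hslt
      have := (div_lt_iff₀ hyx0).mp hslt
      linarith
    -- w strictly decreasing on [x0, x1]
    have hanti : StrictAntiOn w (Icc x0 x1) := by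
      apply strictAntiOn_of_deriv_neg (convex_Icc x0 x1)
      · exact hwc.mono (Icc_subset_Icc hx0.1 hx1M.le)
      · intro y hy
        rw [interior_Icc] at hy
        have hyI : y ∈ Ioo L M := ⟨lt_trans hx0L hy.1, lt_trans hy.2 hx1M⟩
        rw [(hw'at y hyI).deriv]
        exact hw'neg y hy
    have : w x1 < w x0 := hanti (left_mem_Icc.mpr hx1a.le) (right_mem_Icc.mpr hx1a.le) hx1a
    exact absurd (hmin hx1mem) (not_le.mpr this)
  -- conclude by letting ε → 0
  intro x hx
  by_contra hlt
  push_neg at hlt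
  have hd : 0 < x - v x := by linarith
  have hEM : 0 < Real.exp M := Real.exp_pos M
  set ε : ℝ := (x - v x) / (2 * Real.exp M) with hεdef
  have hε : 0 < ε := by positivity
  have := key ε hε x hx
  have hψx : Real.exp M - Real.exp x ≤ Real.exp M := by
    have := Real.exp_pos x
    linarith
  have h1 : ε * (Real.exp M - Real.exp x) ≤ ε * Real.exp M :=
    mul_le_mul_of_nonneg_left hψx hε.le
  have h2 : ε * Real.exp M = (x - v x) / 2 := by
    rw [hεdef]
    field_simp
  linarith
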